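/- Martingale representation property: let Z be a Parisian walk with deterministic starting point Z_0, and suppose the filtration is the natural filtration of Z, i.e. ℱ_t = σ(Z_0, …, Z_t). Then for every complex-valued martingale (X_t)_{t∈ℕ} with respect to (ℱ_t) there exist predictable processes (H_t)_{t≥1} and (K_t)_{t≥1} (i.e. H_t, K_t are ℱ_{t−1}-measurable) such that for all t ∈ ℕ, almost surely X_t = X_0 + Σ_{s=1}^{t} [ H_s (Z_s − Z_{s−1}) + K_s (conj(Z_s) − conj(Z_{s−1})) ]. -/

import Mathlib

open MeasureTheory Complex
open scoped Classical

noncomputable section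

namespace Parisian

/-- The primitive cube root of unity `ζ = (−1 + √3·i)/2`. -/
def zeta : ℂ := (-1 + Real.sqrt 3 * Complex.I) / 2

/-- The lattice `ℤ[ζ] = {a + bζ : a, b ∈ ℤ}` as a subset of `ℂ`. -/
def Zlat : Set ℂ := {z | ∃ a b : ℤ, z = (a : ℂ) + (b : ℂ) * zeta}

/-- The set of admissible steps `{1, ζ, ζ²}`. -/
def steps : Set ℂ := {1, zeta, zeta ^ 2}

/-- The set `P = {0, 1, 1 + ζ}`. -/
def Pset : Set ℂ := {0, 1, 1 + zeta}

/-- Graph distance from the set `P` in `ℤ[ζ]`: the least `n` such that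
`z = p + w₁ + ⋯ + w_n` with `p ∈ P` and each `wᵢ ∈ {1, ζ, ζ²}`. -/
def gdist (z : ℂ) : ℕ :=
  sInf {n : ℕ | ∃ p ∈ Pset, ∃ w : Fin n → ℂ, (∀ i, w i ∈ steps) ∧ z = p + ∑ i, w i}

def A1 : Set ℂ := {z | ∃ k1 k2 : ℤ, z = (k1 : ℂ) + (k2 : ℂ) * zeta ^ 2 ∧ 1 < k2 + 1 ∧ k2 + 1 < k1}
def A2 : Set ℂ := {z | ∃ k1 k2 : ℤ, z = -(k1 : ℂ) * zeta - (k2 : ℂ) ∧ 0 ≤ k2 ∧ k2 < k1}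
def A3 : Set ℂ := {z | ∃ k1 k2 : ℤ, z = -(k1 : ℂ) - (k2 : ℂ) * zeta ∧ 0 < k2 ∧ k2 < k1}
def A4 : Set ℂ := {z | ∃ k1 k2 : ℤ, z = (k1 : ℂ) * zeta + (k2 : ℂ) * zeta ^ 2 ∧ 0 ≤ k2 ∧ k2 < k1}
def A5 : Set ℂ := {z | ∃ k1 k2 : ℤ, z = -(k1 : ℂ) * zeta ^ 2 - (k2 : ℂ) ∧ 1 < k2 + 1 ∧ k2 + 1 < k1}
def A6 : Set ℂ := {z | ∃ k1 k2 : ℤ, z = (k1 : ℂ) + (k2 : ℂ) * zeta ∧ 0 < k2 ∧ k2 < k1}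

def B1 : Set ℂ := {z | ∃ n : ℤ, z = (n : ℂ) ∧ 2 ≤ n}
def B2 : Set ℂ := {z | ∃ n : ℤ, z = (n : ℂ) * zeta - zeta ^ 2 ∧ 1 ≤ n}
def B3 : Set ℂ := {z | ∃ n : ℤ, z = (n : ℂ) * zeta ^ 2 ∧ 1 ≤ n}
def B4 : Set ℂ := {z | ∃ n : ℤ, z = (n : ℂ) ∧ n ≤ -1}
def B5 : Set ℂ := {z | ∃ n : ℤ, z = 1 + (n : ℂ) * zeta ∧ n ≤ -1}
def B6 : Set ℂ := {z | ∃ n : ℤ, z = (n : ℂ) * zeta ^ 2 ∧ n ≤ -2}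

/-- The closure `Ā₁ = A₁ ∪ B₁ ∪ B₅ ∪ {1}`. -/
def Abar1 : Set ℂ := A1 ∪ B1 ∪ B5 ∪ {1}
/-- The closure `Ā₃ = A₃ ∪ B₃ ∪ B₄ ∪ {0}`. -/
def Abar3 : Set ℂ := A3 ∪ B3 ∪ B4 ∪ {0}
/-- The closure `Ā₅ = A₅ ∪ B₂ ∪ B₆ ∪ {1+ζ}`. -/
def Abar5 : Set ℂ := A5 ∪ B2 ∪ B6 ∪ {1 + zeta}

/-- `φ(z) = 1_{Ā₁}(z) + ζ·1_{Ā₃}(z) + ζ²·1_{Ā₅}(z)`. -/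
def phi (z : ℂ) : ℂ :=
  Abar1.indicator 1 z + zeta * Abar3.indicator 1 z + zeta ^ 2 * Abar5.indicator 1 z

/-- `ψ(z) = 1_{A₆}(z) + ζ·1_{A₄}(z) + ζ²·1_{A₂}(z)`. -/
def psi (z : ℂ) : ℂ :=
  A6.indicator 1 z + zeta * A4.indicator 1 z + zeta ^ 2 * A2.indicator 1 z

variable {Ω : Type*} {mΩ : MeasurableSpace Ω}

/-- A Parisian walk: an adapted integrable martingale starting in `ℤ[ζ]` a.s.,
with increments in `{1, ζ, ζ²}` a.s. -/
def IsParisian (μ : Measure Ω) (ℱ : Filtration ℕ mΩ) (Z : ℕ → Ω → ℂ) : Prop :=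
  Martingale Z ℱ μ ∧ (∀ᵐ ω ∂μ, Z 0 ω ∈ Zlat) ∧
    ∀ t : ℕ, ∀ᵐ ω ∂μ, Z (t + 1) ω - Z t ω ∈ steps

/-- The local time of a walk: the number of exits from `Ā₁`, `Ā₃`, `Ā₅` before time `t`. -/
def localTime (Z : ℕ → Ω → ℂ) (t : ℕ) (ω : Ω) : ℕ :=
  ∑ u ∈ Finset.range t,
    ((if Z u ω ∈ Abar1 ∧ Z (u + 1) ω ∉ Abar1 then 1 else 0) +
     (if Z u ω ∈ Abar3 ∧ Z (u + 1) ω ∉ Abar3 then 1 else 0) +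
     (if Z u ω ∈ Abar5 ∧ Z (u + 1) ω ∉ Abar5 then 1 else 0))

/-- `ΔZ_S = ∏_{i : sᵢ = ζ} ΔZᵢ · ∏_{i : sᵢ = ζ²} conj(ΔZᵢ)` where `ΔZᵢ = Zᵢ − Z_{i−1}`,
for a tuple `S : Fin t → ℂ` (with entries in `{1, ζ, ζ²}`). -/
def deltaZS (Z : ℕ → Ω → ℂ) (t : ℕ) (S : Fin t → ℂ) (ω : Ω) : ℂ :=
  ∏ i : Fin t,
    (if S i = zeta then Z ((i : ℕ) + 1) ω - Z (i : ℕ) ω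
     else if S i = zeta ^ 2 then starRingEnd ℂ (Z ((i : ℕ) + 1) ω - Z (i : ℕ) ω)
     else 1)

end Parisian

namespace Parisian



open Filter Topology

section Helpers

lemma zeta_rel : zeta ^ 2 + zeta + 1 = 0 := by
  have hs : (Real.sqrt 3 : ℂ) ^ 2 = 3 := by
    rw [← Complex.ofReal_pow, Real.sq_sqrt (by norm_num : (0:ℝ) ≤ 3)]
    norm_num
  unfold zeta
  linear_combination ((Real.sqrt 3 : ℂ)^2/4) * Complex.I_sq - hs/4

lemma zeta_cube : zeta ^ 3 = 1 := by linear_combination (zeta - 1) * zeta_rel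

lemma conj_zeta : starRingEnd ℂ zeta = zeta ^ 2 := by
  have h2 : zeta ^ 2 = -1 - zeta := by linear_combination zeta_rel
  rw [h2]
  unfold zeta
  simp only [map_div₀, map_add, map_mul, map_neg, map_one, Complex.conj_I,
    Complex.conj_ofReal, map_ofNat]
  ring

lemma conj_zeta_sq : starRingEnd ℂ (zeta ^ 2) = zeta := by
  rw [map_pow, conj_zeta]
  linear_combination zeta * zeta_cube

lemma zeta_ne_one : zeta ≠ 1 := by
  intro h
  have := zeta_rel
  rw [h] at this
  norm_num at this

lemma zeta_sq_ne_one : zeta ^ 2 ≠ 1 := by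
  intro h
  have h' : zeta = -2 := by linear_combination zeta_rel - h
  rw [h'] at h
  norm_num at h

lemma zeta_sq_ne_zeta : zeta ^ 2 ≠ zeta := by
  intro h
  have h1 : zeta = -1/2 := by linear_combination (zeta_rel - h)/2
  rw [h1] at h
  norm_num at h

lemma simpleFunc_factor {Ω γ : Type*} [mγ : MeasurableSpace γ] (p : Ω → γ)
    (φ : @SimpleFunc Ω (mγ.comap p) ℂ) :
    ∃ Φ : γ → ℂ, Measurable Φ ∧ ∀ ω, φ ω = Φ (p ω) := by
  refine @SimpleFunc.induction Ω ℂ (mγ.comap p) _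
    (fun φ => ∃ Φ : γ → ℂ, Measurable Φ ∧ ∀ ω, φ ω = Φ (p ω)) ?_ ?_ φ
  · intro c s hs
    obtain ⟨s', hs', rfl⟩ := hs
    refine ⟨s'.indicator fun _ => c, measurable_const.indicator hs', fun ω => ?_⟩
    classical
    simp [SimpleFunc.piecewise_apply, Set.indicator_apply, Set.mem_preimage]
    rfl
  · rintro f g - ⟨F, hF, hf⟩ ⟨G, hG, hg⟩
    exact ⟨F + G, hF.add hG, fun ω => by simp [hf ω, hg ω]⟩

lemma measurable_factor {Ω γ : Type*} [mγ : MeasurableSpace γ] (p : Ω → γ)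
    {D : Ω → ℂ} (hD : Measurable[mγ.comap p] D) :
    ∃ Φ : γ → ℂ, Measurable Φ ∧ ∀ ω, Φ (p ω) = D ω := by
  letI : MeasurableSpace Ω := mγ.comap p
  have hD' : StronglyMeasurable D := hD.stronglyMeasurable
  choose Φ hΦm hΦeq using fun n => simpleFunc_factor p (hD'.approx n)
  refine ⟨fun x => (↑(liminf (fun n => (Φ n x).re) atTop) : ℂ) +
      (↑(liminf (fun n => (Φ n x).im) atTop) : ℂ) * Complex.I, ?_, fun ω => ?_⟩
  · exact ((Complex.measurable_ofReal.comp
        (Measurable.liminf fun n => Complex.measurable_re.comp (hΦm n))).add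
      ((Complex.measurable_ofReal.comp
        (Measurable.liminf fun n => Complex.measurable_im.comp (hΦm n))).mul_const Complex.I))
  · have ht : Tendsto (fun n => Φ n (p ω)) atTop (𝓝 (D ω)) := by
      simpa only [fun n => hΦeq n ω] using hD'.tendsto_approx ω
    have hre : Tendsto (fun n => (Φ n (p ω)).re) atTop (𝓝 ((D ω).re)) :=
      (Complex.continuous_re.tendsto _).comp ht
    have him : Tendsto (fun n => (Φ n (p ω)).im) atTop (𝓝 ((D ω).im)) :=
      (Complex.continuous_im.tendsto _).comp ht
    simp only []
    rw [hre.liminf_eq, him.liminf_eq, Complex.re_add_im]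

lemma condexp_clm {Ω : Type*} {m mΩ : MeasurableSpace Ω} (hm : m ≤ mΩ)
    (μ : Measure Ω) [IsFiniteMeasure μ] {E F : Type*} [NormedAddCommGroup E]
    [NormedSpace ℝ E] [CompleteSpace E] [NormedAddCommGroup F] [NormedSpace ℝ F]
    [CompleteSpace F] (T : E →L[ℝ] F) {f : Ω → E} (hf : Integrable f μ) :
    (μ[fun ω => T (f ω)|m]) =ᵐ[μ] fun ω => T ((μ[f|m]) ω) := by
  refine (ae_eq_condExp_of_forall_setIntegral_eq hm (T.integrable_comp hf)
    (fun s hs hμs => (T.integrable_comp integrable_condExp).integrableOn)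
    (fun s hs hμs => ?_)
    ⟨fun ω => T ((μ[f|m]) ω),
      T.continuous.comp_stronglyMeasurable stronglyMeasurable_condExp,
      EventuallyEq.rfl⟩).symm
  rw [T.integral_comp_comm integrable_condExp.integrableOn,
    T.integral_comp_comm hf.integrableOn, setIntegral_condExp hm hf hs]

lemma condexp_mul_indicator {Ω : Type*} {m mΩ : MeasurableSpace Ω} (hm : m ≤ mΩ)
    (μ : Measure Ω) [IsFiniteMeasure μ] {f : Ω → ℂ} (hf : StronglyMeasurable[m] f)
    {E : Set Ω} (hE : MeasurableSet E)
    (hint : Integrable (fun ω => f ω * (↑(E.indicator (fun _ => (1:ℝ)) ω) : ℂ)) μ) :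
    (μ[fun ω => f ω * (↑(E.indicator (fun _ => (1:ℝ)) ω) : ℂ)|m])
      =ᵐ[μ] fun ω => f ω * (μ[fun ω' => (↑(E.indicator (fun _ => (1:ℝ)) ω') : ℂ)|m]) ω := by
  classical
  set χ : Ω → ℝ := E.indicator (fun _ => (1:ℝ)) with hχ
  have hχm : StronglyMeasurable χ := stronglyMeasurable_const.indicator hE
  have hχi : Integrable χ μ := (integrable_const (1:ℝ)).indicator hE
  set a : Ω → ℝ := fun ω => (f ω).re with ha
  set b : Ω → ℝ := fun ω => (f ω).im with hb
  have hasm : StronglyMeasurable[m] a := Complex.continuous_re.comp_stronglyMeasurable hf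
  have hbsm : StronglyMeasurable[m] b := Complex.continuous_im.comp_stronglyMeasurable hf
  have hbound : ∀ (g : Ω → ℝ), (∀ ω, |g ω| ≤ ‖f ω‖) →
      Integrable (fun ω => g ω * χ ω) μ → True := fun _ _ _ => trivial
  have habs : ∀ ω, ‖a ω * χ ω‖ ≤ ‖f ω * (↑(χ ω) : ℂ)‖ := by
    intro ω
    rw [norm_mul, norm_mul, Complex.norm_real]
    exact mul_le_mul_of_nonneg_right (Complex.abs_re_le_norm (f ω)) (abs_nonneg _)
  have hbabs : ∀ ω, ‖b ω * χ ω‖ ≤ ‖f ω * (↑(χ ω) : ℂ)‖ := by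
    intro ω
    rw [norm_mul, norm_mul, Complex.norm_real]
    exact mul_le_mul_of_nonneg_right (Complex.abs_im_le_norm (f ω)) (abs_nonneg _)
  have hai : Integrable (fun ω => a ω * χ ω) μ :=
    hint.norm.mono' (((hasm.mono hm).mul hχm).aestronglyMeasurable) (ae_of_all _ habs)
  have hbi : Integrable (fun ω => b ω * χ ω) μ :=
    hint.norm.mono' (((hbsm.mono hm).mul hχm).aestronglyMeasurable) (ae_of_all _ hbabs)
  have hpa : μ[fun ω => a ω * χ ω|m] =ᵐ[μ] fun ω => a ω * (μ[χ|m]) ω :=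
    condExp_mul_of_stronglyMeasurable_left (f := a) (g := χ) hasm hai hχi
  have hpb : μ[fun ω => b ω * χ ω|m] =ᵐ[μ] fun ω => b ω * (μ[χ|m]) ω :=
    condExp_mul_of_stronglyMeasurable_left (f := b) (g := χ) hbsm hbi hχi
  have hsplit : (fun ω => f ω * (↑(χ ω) : ℂ))
      = fun ω => (↑(a ω * χ ω) : ℂ) + Complex.I • (↑(b ω * χ ω) : ℂ) := by
    funext ω
    simp only [smul_eq_mul]
    push_cast
    linear_combination (-(↑(χ ω) : ℂ)) * Complex.re_add_im (f ω)
  have hcast : ∀ (g : Ω → ℝ), Integrable g μ →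
      μ[fun ω => (↑(g ω):ℂ)|m] =ᵐ[μ] fun ω => (↑((μ[g|m]) ω) : ℂ) := fun g hg =>
    condexp_clm hm μ Complex.ofRealCLM hg
  calc μ[fun ω => f ω * (↑(χ ω) : ℂ)|m]
      =ᵐ[μ] μ[(fun ω => (↑(a ω * χ ω) : ℂ)) + fun ω => Complex.I • (↑(b ω * χ ω) : ℂ)|m] := by
        rw [hsplit]; rfl
    _ =ᵐ[μ] μ[fun ω => (↑(a ω * χ ω) : ℂ)|m] + μ[fun ω => Complex.I • (↑(b ω * χ ω) : ℂ)|m] :=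
        condExp_add (hai.ofReal) ((hbi.ofReal).smul Complex.I) _
    _ =ᵐ[μ] fun ω => (↑((μ[fun ω' => a ω' * χ ω'|m]) ω) : ℂ)
          + Complex.I • (↑((μ[fun ω' => b ω' * χ ω'|m]) ω) : ℂ) := by
        have h2 := (condExp_smul (μ := μ) (m := m) Complex.I
          (fun ω => (↑(b ω * χ ω) : ℂ))).trans
          ((hcast _ hbi).const_smul Complex.I)
        exact (hcast _ hai).add h2
    _ =ᵐ[μ] fun ω => f ω * (μ[fun ω' => (↑(χ ω') : ℂ)|m]) ω := by
        filter_upwards [hpa, hpb, hcast χ hχi] with ω h1 h2 h3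
        rw [h1, h2, h3]
        simp only [smul_eq_mul]
        push_cast
        linear_combination ((μ[χ|m]) ω : ℂ) * (Complex.re_add_im (f ω))

lemma step_repr {Ω : Type*} {mΩ : MeasurableSpace Ω} (μ : Measure Ω) [IsProbabilityMeasure μ]
    (ℱ : Filtration ℕ mΩ) (Z : ℕ → Ω → ℂ) (hZ : IsParisian μ ℱ Z)
    (hnat : ∀ t : ℕ, (ℱ t : MeasurableSpace Ω)
      = ⨆ s ∈ Set.Iic t, MeasurableSpace.comap (Z s) inferInstance)
    (X : ℕ → Ω → ℂ) (hX : Martingale X ℱ μ) (t : ℕ) :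
    ∃ H K : Ω → ℂ, StronglyMeasurable[ℱ t] H ∧ StronglyMeasurable[ℱ t] K ∧
      ∀ᵐ ω ∂μ, X (t + 1) ω - X t ω
        = H ω * (Z (t + 1) ω - Z t ω)
          + K ω * (starRingEnd ℂ (Z (t + 1) ω) - starRingEnd ℂ (Z t ω)) := by
  have hm : (ℱ t : MeasurableSpace Ω) ≤ mΩ := ℱ.le t
  have hZm : ∀ s, Measurable[ℱ s] (Z s) := fun s => (hZ.1.stronglyAdapted s).measurable
  set mp : MeasurableSpace (Ω × ℂ) := (ℱ t).prod inferInstance with hmp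
  set p : Ω → Ω × ℂ := fun ω => (ω, Z (t + 1) ω) with hp
  have hpm : @Measurable Ω (Ω × ℂ) (mp.comap p) mp p := measurable_iff_comap_le.2 le_rfl
  have hFt : (ℱ t : MeasurableSpace Ω) ≤ mp.comap p := by
    have h1 : @Measurable Ω Ω (mp.comap p) (ℱ t) id :=
      (@measurable_fst Ω ℂ (ℱ t) inferInstance).comp hpm
    have h2 := measurable_iff_comap_le.1 h1
    rwa [MeasurableSpace.comap_id] at h2
  have hle : (ℱ (t + 1) : MeasurableSpace Ω) ≤ mp.comap p := by
    rw [hnat (t + 1)]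
    refine iSup₂_le fun s hs => ?_
    rcases Nat.lt_or_ge s (t + 1) with h | h
    · exact le_trans (measurable_iff_comap_le.1
        ((hZm s).mono (ℱ.mono (Nat.lt_succ_iff.mp h)) le_rfl)) hFt
    · have hst : s = t + 1 := le_antisymm hs h
      subst hst
      exact measurable_iff_comap_le.1 ((@measurable_snd Ω ℂ (ℱ t) inferInstance).comp hpm)
  have hDsm : StronglyMeasurable[ℱ (t + 1)] fun ω => X (t + 1) ω - X t ω :=
    (hX.stronglyAdapted (t + 1)).sub ((hX.stronglyAdapted t).mono (ℱ.mono (Nat.le_succ t)))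
  have hDm : Measurable[mp.comap p] fun ω => X (t + 1) ω - X t ω :=
    (hDsm.mono hle).measurable
  obtain ⟨Φ, hΦm, hΦeq⟩ := measurable_factor (mγ := mp) p hDm
  have hsec : ∀ w : ℂ, Measurable[ℱ t] fun ω => Φ (ω, Z t ω + w) := by
    intro w
    have hpair : @Measurable Ω (Ω × ℂ) (ℱ t) mp fun ω => (ω, Z t ω + w) :=
      Measurable.prodMk (@measurable_id Ω (ℱ t)) ((hZm t).add_const w)
    exact hΦm.comp hpair
  have heval : ∀ w : ℂ, ∀ ω, Z (t + 1) ω - Z t ω = w → Φ (ω, Z t ω + w) = X (t + 1) ω - X t ω := by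
    intro w ω hw
    have hzw : Z t ω + w = Z (t + 1) ω := by rw [← hw]; ring
    rw [hzw]
    exact hΦeq ω
  -- events and indicators
  have hWmeas : Measurable fun ω => Z (t + 1) ω - Z t ω :=
    (((hZ.1.stronglyAdapted (t + 1)).mono (ℱ.le _)).measurable).sub
      (((hZ.1.stronglyAdapted t).mono (ℱ.le _)).measurable)
  set Ew : ℂ → Set Ω := fun w => {ω | Z (t + 1) ω - Z t ω = w} with hEwdef
  have hEwm : ∀ w, MeasurableSet (Ew w) := fun w => hWmeas (measurableSet_singleton w)
  set χ : ℂ → Ω → ℂ := fun w ω => (↑((Ew w).indicator (fun _ => (1:ℝ)) ω) : ℂ) with hχdef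
  have hχint : ∀ w, Integrable (χ w) μ := fun w =>
    ((integrable_const (1:ℝ)).indicator (hEwm w)).ofReal
  set Q : ℂ → Ω → ℂ := fun w => μ[χ w|ℱ t] with hQdef
  have hχval : ∀ v w : ℂ, ∀ ω, Z (t + 1) ω - Z t ω = w → χ v ω = if w = v then 1 else 0 := by
    intro v w ω hw
    by_cases h : w = v
    · subst h
      have hmem : ω ∈ Ew w := hw
      simp [hχdef, Set.indicator_of_mem hmem]
    · have hnmem : ω ∉ Ew v := fun hc => h (hw.symm.trans hc)
      simp [hχdef, Set.indicator_of_notMem hnmem, h]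
  -- integrability of f_w * χ_w
  have hDint : Integrable (fun ω => X (t + 1) ω - X t ω) μ :=
    (hX.integrable (t + 1)).sub (hX.integrable t)
  have hmulint : ∀ w : ℂ, Integrable (fun ω => Φ (ω, Z t ω + w) * χ w ω) μ := by
    intro w
    refine hDint.norm.mono' ((((hsec w).mono hm le_rfl).mul
      (Complex.measurable_ofReal.comp (measurable_const.indicator (hEwm w)))).aestronglyMeasurable)
      (ae_of_all _ fun ω => ?_)
    by_cases hw : ω ∈ Ew w
    · have : χ w ω = 1 := by simp [hχdef, Set.indicator_of_mem hw]
      rw [this, mul_one, heval w ω hw]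
    · have : χ w ω = 0 := by simp [hχdef, Set.indicator_of_notMem hw]
      rw [this, mul_zero]
      simp
  have hpull : ∀ w : ℂ, μ[fun ω => Φ (ω, Z t ω + w) * χ w ω|ℱ t]
      =ᵐ[μ] fun ω => Φ (ω, Z t ω + w) * Q w ω := fun w =>
    condexp_mul_indicator hm μ ((hsec w).stronglyMeasurable) (hEwm w) (hmulint w)
  -- condexp linear helpers
  have hcond3 : ∀ g1 g2 g3 : Ω → ℂ, Integrable g1 μ → Integrable g2 μ → Integrable g3 μ →
      μ[fun ω => g1 ω + g2 ω + g3 ω|ℱ t]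
        =ᵐ[μ] fun ω => (μ[g1|ℱ t]) ω + (μ[g2|ℱ t]) ω + (μ[g3|ℱ t]) ω := by
    intro g1 g2 g3 h1 h2 h3
    have ha : μ[(fun ω => g1 ω + g2 ω) + g3|ℱ t]
        =ᵐ[μ] μ[fun ω => g1 ω + g2 ω|ℱ t] + μ[g3|ℱ t] := condExp_add (h1.add h2) h3 _
    have hb : μ[g1 + g2|ℱ t] =ᵐ[μ] μ[g1|ℱ t] + μ[g2|ℱ t] := condExp_add h1 h2 _
    filter_upwards [ha, hb] with ω hA hB
    have : (fun ω => g1 ω + g2 ω + g3 ω) = (fun ω => g1 ω + g2 ω) + g3 := rfl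
    rw [this, hA]
    simp only [Pi.add_apply]
    have : (fun ω => g1 ω + g2 ω) = g1 + g2 := rfl
    rw [this, hB]
    simp [Pi.add_apply]
  have hcmul : ∀ (c : ℂ) (g : Ω → ℂ),
      μ[fun ω => c * g ω|ℱ t] =ᵐ[μ] fun ω => c * (μ[g|ℱ t]) ω := by
    intro c g
    have h := condExp_smul (μ := μ) (m := ℱ t) c g
    filter_upwards [h] with ω hω
    exact hω
  -- martingale zero conditional expectations
  have hW0 : μ[fun ω => Z (t + 1) ω - Z t ω|ℱ t] =ᵐ[μ] fun _ => (0:ℂ) := by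
    have h1 : μ[fun ω => Z (t + 1) ω - Z t ω|ℱ t]
        =ᵐ[μ] μ[Z (t + 1)|ℱ t] - μ[Z t|ℱ t] := condExp_sub (hZ.1.integrable _) (hZ.1.integrable _) _
    have h2 := hZ.1.condExp_ae_eq (Nat.le_succ t)
    have h3 : μ[Z t|ℱ t] = Z t :=
      condExp_of_stronglyMeasurable hm (hZ.1.stronglyAdapted t) (hZ.1.integrable t)
    refine h1.trans ?_
    rw [h3]
    filter_upwards [h2] with ω hω
    simp [Pi.sub_apply, hω]
  have hD0 : μ[fun ω => X (t + 1) ω - X t ω|ℱ t] =ᵐ[μ] fun _ => (0:ℂ) := by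
    have h1 : μ[fun ω => X (t + 1) ω - X t ω|ℱ t]
        =ᵐ[μ] μ[X (t + 1)|ℱ t] - μ[X t|ℱ t] := condExp_sub (hX.integrable _) (hX.integrable _) _
    have h2 := hX.condExp_ae_eq (Nat.le_succ t)
    have h3 : μ[X t|ℱ t] = X t :=
      condExp_of_stronglyMeasurable hm (hX.stronglyAdapted t) (hX.integrable t)
    refine h1.trans ?_
    rw [h3]
    filter_upwards [h2] with ω hω
    simp [Pi.sub_apply, hω]
  have hWc0 : μ[fun ω => starRingEnd ℂ (Z (t + 1) ω - Z t ω)|ℱ t] =ᵐ[μ] fun _ => (0:ℂ) := by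
    have hWint : Integrable (fun ω => Z (t + 1) ω - Z t ω) μ :=
      (hZ.1.integrable (t + 1)).sub (hZ.1.integrable t)
    have hT := condexp_clm hm μ (Complex.conjCLE : ℂ ≃L[ℝ] ℂ).toContinuousLinearMap hWint
    refine EventuallyEq.trans ?_ (hT.trans ?_)
    · rfl
    · filter_upwards [hW0] with ω hω
      simp only [ContinuousLinearEquiv.coe_coe]
      rw [hω]
      simp
  have hsteps := hZ.2.2 t
  have hsteps' : ∀ᵐ ω ∂μ, Z (t + 1) ω - Z t ω = 1 ∨ Z (t + 1) ω - Z t ω = zeta ∨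
      Z (t + 1) ω - Z t ω = zeta ^ 2 := by
    filter_upwards [hsteps] with ω hs
    simpa [steps, Set.mem_insert_iff, Set.mem_singleton_iff] using hs
  -- R1
  have hR1 : ∀ᵐ ω ∂μ, Q 1 ω + Q zeta ω + Q (zeta ^ 2) ω = 1 := by
    have hae : (fun ω => χ 1 ω + χ zeta ω + χ (zeta ^ 2) ω) =ᵐ[μ] fun _ => (1:ℂ) := by
      filter_upwards [hsteps'] with ω hs
      rcases hs with h | h | h <;>
        rw [hχval 1 _ ω h, hχval zeta _ ω h, hχval (zeta ^ 2) _ ω h]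
      · rw [if_pos rfl, if_neg (Ne.symm zeta_ne_one), if_neg (Ne.symm zeta_sq_ne_one)]; ring
      · rw [if_neg zeta_ne_one, if_pos rfl, if_neg (Ne.symm zeta_sq_ne_zeta)]; ring
      · rw [if_neg zeta_sq_ne_one, if_neg zeta_sq_ne_zeta, if_pos rfl]; ring
    have hc3 := hcond3 (χ 1) (χ zeta) (χ (zeta ^ 2)) (hχint 1) (hχint zeta) (hχint (zeta ^ 2))
    have hcc := condExp_congr_ae (m := ℱ t) hae
    have h1c : μ[fun _ => (1:ℂ)|ℱ t] = fun _ => (1:ℂ) := condExp_const hm 1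
    filter_upwards [hc3, hcc] with ω hA hB
    rw [← hA, hB, h1c]
  -- R2
  have hR2 : ∀ᵐ ω ∂μ, Q 1 ω + zeta * Q zeta ω + zeta ^ 2 * Q (zeta ^ 2) ω = 0 := by
    have hae : (fun ω => Z (t + 1) ω - Z t ω)
        =ᵐ[μ] fun ω => 1 * χ 1 ω + zeta * χ zeta ω + zeta ^ 2 * χ (zeta ^ 2) ω := by
      filter_upwards [hsteps'] with ω hs
      rcases hs with h | h | h <;>
        rw [hχval 1 _ ω h, hχval zeta _ ω h, hχval (zeta ^ 2) _ ω h]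
      · rw [if_pos rfl, if_neg (Ne.symm zeta_ne_one), if_neg (Ne.symm zeta_sq_ne_one), h]; ring
      · rw [if_neg zeta_ne_one, if_pos rfl, if_neg (Ne.symm zeta_sq_ne_zeta), h]; ring
      · rw [if_neg zeta_sq_ne_one, if_neg zeta_sq_ne_zeta, if_pos rfl, h]; ring
    have hc3 := hcond3 (fun ω => 1 * χ 1 ω) (fun ω => zeta * χ zeta ω)
      (fun ω => zeta ^ 2 * χ (zeta ^ 2) ω) ((hχint 1).const_mul 1)
      ((hχint zeta).const_mul zeta) ((hχint (zeta ^ 2)).const_mul (zeta ^ 2))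
    have hcc := condExp_congr_ae (m := ℱ t) hae
    filter_upwards [hc3, hcmul 1 (χ 1), hcmul zeta (χ zeta), hcmul (zeta ^ 2) (χ (zeta ^ 2)),
      hcc, hW0] with ω a1 a2 a3 a4 a5 a6
    have key : (1:ℂ) * Q 1 ω + zeta * Q zeta ω + zeta ^ 2 * Q (zeta ^ 2) ω = 0 := by
      rw [← a2, ← a3, ← a4, ← a1, ← a5, a6]
    linear_combination key
  -- R3
  have hR3 : ∀ᵐ ω ∂μ, Q 1 ω + zeta ^ 2 * Q zeta ω + zeta * Q (zeta ^ 2) ω = 0 := by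
    have hae : (fun ω => starRingEnd ℂ (Z (t + 1) ω - Z t ω))
        =ᵐ[μ] fun ω => 1 * χ 1 ω + zeta ^ 2 * χ zeta ω + zeta * χ (zeta ^ 2) ω := by
      filter_upwards [hsteps'] with ω hs
      rcases hs with h | h | h <;>
        rw [hχval 1 _ ω h, hχval zeta _ ω h, hχval (zeta ^ 2) _ ω h, h]
      · rw [if_pos rfl, if_neg (Ne.symm zeta_ne_one), if_neg (Ne.symm zeta_sq_ne_one), map_one]
        ring
      · rw [if_neg zeta_ne_one, if_pos rfl, if_neg (Ne.symm zeta_sq_ne_zeta), conj_zeta]; ring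
      · rw [if_neg zeta_sq_ne_one, if_neg zeta_sq_ne_zeta, if_pos rfl, conj_zeta_sq]; ring
    have hc3 := hcond3 (fun ω => 1 * χ 1 ω) (fun ω => zeta ^ 2 * χ zeta ω)
      (fun ω => zeta * χ (zeta ^ 2) ω) ((hχint 1).const_mul 1)
      ((hχint zeta).const_mul (zeta ^ 2)) ((hχint (zeta ^ 2)).const_mul zeta)
    have hcc := condExp_congr_ae (m := ℱ t) hae
    filter_upwards [hc3, hcmul 1 (χ 1), hcmul (zeta ^ 2) (χ zeta), hcmul zeta (χ (zeta ^ 2)),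
      hcc, hWc0] with ω a1 a2 a3 a4 a5 a6
    have key : (1:ℂ) * Q 1 ω + zeta ^ 2 * Q zeta ω + zeta * Q (zeta ^ 2) ω = 0 := by
      rw [← a2, ← a3, ← a4, ← a1, ← a5, a6]
    linear_combination key
  -- R4
  have hR4 : ∀ᵐ ω ∂μ, Φ (ω, Z t ω + 1) * Q 1 ω + Φ (ω, Z t ω + zeta) * Q zeta ω
      + Φ (ω, Z t ω + zeta ^ 2) * Q (zeta ^ 2) ω = 0 := by
    have hae : (fun ω => X (t + 1) ω - X t ω)
        =ᵐ[μ] fun ω => Φ (ω, Z t ω + 1) * χ 1 ω + Φ (ω, Z t ω + zeta) * χ zeta ω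
          + Φ (ω, Z t ω + zeta ^ 2) * χ (zeta ^ 2) ω := by
      filter_upwards [hsteps'] with ω hs
      rcases hs with h | h | h <;>
        rw [hχval 1 _ ω h, hχval zeta _ ω h, hχval (zeta ^ 2) _ ω h]
      · rw [if_pos rfl, if_neg (Ne.symm zeta_ne_one), if_neg (Ne.symm zeta_sq_ne_one),
          heval 1 ω h]
        ring
      · rw [if_neg zeta_ne_one, if_pos rfl, if_neg (Ne.symm zeta_sq_ne_zeta), heval zeta ω h]
        ring
      · rw [if_neg zeta_sq_ne_one, if_neg zeta_sq_ne_zeta, if_pos rfl, heval (zeta ^ 2) ω h]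
        ring
    have hc3 := hcond3 (fun ω => Φ (ω, Z t ω + 1) * χ 1 ω)
      (fun ω => Φ (ω, Z t ω + zeta) * χ zeta ω)
      (fun ω => Φ (ω, Z t ω + zeta ^ 2) * χ (zeta ^ 2) ω)
      (hmulint 1) (hmulint zeta) (hmulint (zeta ^ 2))
    have hcc := condExp_congr_ae (m := ℱ t) hae
    filter_upwards [hc3, hpull 1, hpull zeta, hpull (zeta ^ 2), hcc, hD0]
      with ω a1 a2 a3 a4 a5 a6
    rw [← a2, ← a3, ← a4, ← a1, ← a5, a6]
  -- conclusion
  refine ⟨fun ω => (Φ (ω, Z t ω + 1) + zeta ^ 2 * Φ (ω, Z t ω + zeta)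
      + zeta * Φ (ω, Z t ω + zeta ^ 2)) / 3,
    fun ω => (Φ (ω, Z t ω + 1) + zeta * Φ (ω, Z t ω + zeta)
      + zeta ^ 2 * Φ (ω, Z t ω + zeta ^ 2)) / 3, ?_, ?_, ?_⟩
  · exact ((((hsec 1).add ((hsec zeta).const_mul (zeta ^ 2))).add
      ((hsec (zeta ^ 2)).const_mul zeta)).div_const 3).stronglyMeasurable
  · exact ((((hsec 1).add ((hsec zeta).const_mul zeta)).add
      ((hsec (zeta ^ 2)).const_mul (zeta ^ 2))).div_const 3).stronglyMeasurable
  · filter_upwards [hsteps', hR1, hR2, hR3, hR4] with ω hs h1 h2 h3 h4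
    have hq1 : Q 1 ω = 1 / 3 := by
      linear_combination (h1 + h2 + h3) / 3 - (Q zeta ω + Q (zeta ^ 2) ω) / 3 * zeta_rel
    have hqz : Q zeta ω = 1 / 3 := by
      linear_combination (h1 + zeta ^ 2 * h2 + zeta * h3) / 3
        - (Q 1 ω + 2 * (zeta - 1) * Q zeta ω
          + (1 + zeta * (zeta - 1)) * Q (zeta ^ 2) ω) / 3 * zeta_rel
    have hq2 : Q (zeta ^ 2) ω = 1 / 3 := by
      linear_combination (h1 + zeta * h2 + zeta ^ 2 * h3) / 3
        - (Q 1 ω + (1 + zeta * (zeta - 1)) * Q zeta ω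
          + 2 * (zeta - 1) * Q (zeta ^ 2) ω) / 3 * zeta_rel
    have hC : Φ (ω, Z t ω + 1) + Φ (ω, Z t ω + zeta) + Φ (ω, Z t ω + zeta ^ 2) = 0 := by
      linear_combination 3 * h4 - 3 * Φ (ω, Z t ω + 1) * hq1
        - 3 * Φ (ω, Z t ω + zeta) * hqz - 3 * Φ (ω, Z t ω + zeta ^ 2) * hq2
    have hconj : starRingEnd ℂ (Z (t + 1) ω) - starRingEnd ℂ (Z t ω)
        = starRingEnd ℂ (Z (t + 1) ω - Z t ω) := (map_sub (starRingEnd ℂ) _ _).symm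
    rcases hs with h | h | h
    · have hD1 := heval 1 ω h
      rw [hconj, h, map_one]
      linear_combination -hD1 + hC / 3 - (Φ (ω, Z t ω + zeta)
        + Φ (ω, Z t ω + zeta ^ 2)) / 3 * zeta_rel
    · have hDz := heval zeta ω h
      rw [hconj, h, conj_zeta]
      linear_combination -hDz + hC / 3 - (Φ (ω, Z t ω + 1) + 2 * (zeta - 1) * Φ (ω, Z t ω + zeta)
        + (1 + zeta * (zeta - 1)) * Φ (ω, Z t ω + zeta ^ 2)) / 3 * zeta_rel
    · have hD2 := heval (zeta ^ 2) ω h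
      rw [hconj, h, conj_zeta_sq]
      linear_combination -hD2 + hC / 3 - (Φ (ω, Z t ω + 1)
        + (1 + zeta * (zeta - 1)) * Φ (ω, Z t ω + zeta)
        + 2 * (zeta - 1) * Φ (ω, Z t ω + zeta ^ 2)) / 3 * zeta_rel

end Helpers

/-- **Martingale representation property.** For a Parisian walk `Z` with deterministic
start and natural filtration, every complex-valued martingale `X` is a stochastic
integral with respect to `(Z, conj Z)`: there are predictable `H, K` with
`X_t = X_0 + Σ_{s=1}^t (H_s ΔZ_s + K_s Δ(conj Z)_s)` a.s. for every `t`. -/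
theorem parisian_martingale_representation
    {Ω : Type*} {mΩ : MeasurableSpace Ω} (μ : Measure Ω) [IsProbabilityMeasure μ]
    (ℱ : Filtration ℕ mΩ) (Z : ℕ → Ω → ℂ) (hZ : IsParisian μ ℱ Z)
    (z0 : ℂ) (hz0 : ∀ ω, Z 0 ω = z0)
    (hnat : ∀ t : ℕ, (ℱ t : MeasurableSpace Ω)
      = ⨆ s ∈ Set.Iic t, MeasurableSpace.comap (Z s) inferInstance)
    (X : ℕ → Ω → ℂ) (hX : Martingale X ℱ μ) :
    ∃ H K : ℕ → Ω → ℂ,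
      (∀ s : ℕ, StronglyMeasurable[ℱ s] (H (s + 1)) ∧ StronglyMeasurable[ℱ s] (K (s + 1))) ∧
      ∀ t : ℕ, ∀ᵐ ω ∂μ,
        X t ω = X 0 ω + ∑ s ∈ Finset.range t,
          (H (s + 1) ω * (Z (s + 1) ω - Z s ω) +
           K (s + 1) ω * (starRingEnd ℂ (Z (s + 1) ω) - starRingEnd ℂ (Z s ω))) := by
  choose Hs Ks hHm hKm hrep using fun s => step_repr μ ℱ Z hZ hnat X hX s
  refine ⟨fun n => Nat.casesOn n (fun _ => 0) Hs, fun n => Nat.casesOn n (fun _ => 0) Ks,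
    fun s => ⟨hHm s, hKm s⟩, fun t => ?_⟩
  have hall : ∀ᵐ ω ∂μ, ∀ s, X (s + 1) ω - X s ω
      = Hs s ω * (Z (s + 1) ω - Z s ω)
        + Ks s ω * (starRingEnd ℂ (Z (s + 1) ω) - starRingEnd ℂ (Z s ω)) :=
    (ae_all_iff).2 hrep
  filter_upwards [hall] with ω hω
  have hsum : ∑ s ∈ Finset.range t,
      (Hs s ω * (Z (s + 1) ω - Z s ω)
        + Ks s ω * (starRingEnd ℂ (Z (s + 1) ω) - starRingEnd ℂ (Z s ω)))
      = ∑ s ∈ Finset.range t, (X (s + 1) ω - X s ω) :=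
    Finset.sum_congr rfl fun s _ => (hω s).symm
  rw [hsum, Finset.sum_range_sub (fun s => X s ω) t]
  ring


end Parisian
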